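/- Let V be a Volterra operator in class 𝒱⁺ (a_{ki} ≥ 0 for k < i) or 𝒱⁻ (a_{ki} ≤ 0 for k < i), and let b ∈ c₀ be a nonincreasing sequence (hence b_k ≥ 0). Then for every x ∈ S, the sequence φ_b(Vⁿ(x)) is monotone (nondecreasing if V ∈ 𝒱⁺, nonincreasing if V ∈ 𝒱⁻), bounded between 0 and b₁, and hence converges. -/
import Mathlib


open Filter Topology

-- inner series summable
lemma vaux_inner_summable (a : ℕ → ℕ → ℝ) (hbd : ∀ k i, |a k i| ≤ 1) (y : ℕ → ℝ)
    (hy0 : ∀ k, 0 ≤ y k) (hys : Summable y) (k : ℕ) :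
    Summable fun i => a k i * y i := by
  apply Summable.of_abs
  apply hys.of_nonneg_of_le (fun i => abs_nonneg _)
  intro i
  rw [abs_mul, abs_of_nonneg (hy0 i)]
  exact mul_le_of_le_one_left (hy0 i) (hbd k i)

lemma vaux_g_bound (a : ℕ → ℕ → ℝ) (hbd : ∀ k i, |a k i| ≤ 1) (y : ℕ → ℝ)
    (hy0 : ∀ k, 0 ≤ y k) (hys : Summable y) (hy1 : ∑' k, y k = 1) (k : ℕ) :
    |∑' i, a k i * y i| ≤ 1 := by
  have h1 : |∑' i, a k i * y i| ≤ ∑' i, |a k i * y i| := by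
    simpa only [Real.norm_eq_abs] using norm_tsum_le_tsum_norm (f := fun i => a k i * y i)
      (by simpa only [Real.norm_eq_abs] using (vaux_inner_summable a hbd y hy0 hys k).abs)
  refine h1.trans ?_
  calc ∑' i, |a k i * y i| ≤ ∑' i, y i := by
        apply Summable.tsum_le_tsum _ (vaux_inner_summable a hbd y hy0 hys k).abs hys
        intro i
        rw [abs_mul, abs_of_nonneg (hy0 i)]
        exact mul_le_of_le_one_left (hy0 i) (hbd k i)
    _ = 1 := hy1

-- summability of the double sum with bounded coefficient
lemma vaux_prod_summable (a : ℕ → ℕ → ℝ) (hbd : ∀ k i, |a k i| ≤ 1)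
    (c : ℕ → ℝ) (C : ℝ) (hc : ∀ k, |c k| ≤ C)
    (y : ℕ → ℝ) (hy0 : ∀ k, 0 ≤ y k) (hys : Summable y) :
    Summable fun p : ℕ × ℕ => c p.1 * a p.1 p.2 * y p.1 * y p.2 := by
  have hyy : Summable fun p : ℕ × ℕ => y p.1 * y p.2 :=
    hys.mul_of_nonneg hys hy0 hy0
  apply Summable.of_abs
  apply (hyy.mul_left C).of_nonneg_of_le (fun p => abs_nonneg _)
  intro p
  have hC : 0 ≤ C := le_trans (abs_nonneg _) (hc 0)
  rw [abs_mul, abs_mul, abs_mul, abs_of_nonneg (hy0 p.1), abs_of_nonneg (hy0 p.2)]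
  calc |c p.1| * |a p.1 p.2| * y p.1 * y p.2
      ≤ C * 1 * y p.1 * y p.2 := by
        apply mul_le_mul_of_nonneg_right _ (hy0 p.2)
        apply mul_le_mul_of_nonneg_right _ (hy0 p.1)
        exact mul_le_mul (hc p.1) (hbd p.1 p.2) (abs_nonneg _) hC
    _ = C * (y p.1 * y p.2) := by ring

lemma vaux_double (a : ℕ → ℕ → ℝ) (hbd : ∀ k i, |a k i| ≤ 1)
    (c : ℕ → ℝ) (C : ℝ) (hc : ∀ k, |c k| ≤ C)
    (y : ℕ → ℝ) (hy0 : ∀ k, 0 ≤ y k) (hys : Summable y) :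
    ∑' k, c k * y k * (∑' i, a k i * y i)
      = ∑' p : ℕ × ℕ, c p.1 * a p.1 p.2 * y p.1 * y p.2 := by
  have hfib : ∀ k, Summable fun i => c k * a k i * y k * y i := by
    intro k
    have := ((vaux_inner_summable a hbd y hy0 hys k).mul_left (c k * y k))
    apply this.congr
    intro i; ring
  rw [Summable.tsum_prod' (vaux_prod_summable a hbd c C hc y hy0 hys) hfib]
  apply tsum_congr
  intro k
  rw [← tsum_mul_left]
  apply tsum_congr
  intro i; ring

lemma vaux_sum_zero (a : ℕ → ℕ → ℝ) (hskew : ∀ k i, a k i = -a i k)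
    (hbd : ∀ k i, |a k i| ≤ 1)
    (y : ℕ → ℝ) (hy0 : ∀ k, 0 ≤ y k) (hys : Summable y) :
    ∑' p : ℕ × ℕ, a p.1 p.2 * y p.1 * y p.2 = 0 := by
  set F : ℕ × ℕ → ℝ := fun p => a p.1 p.2 * y p.1 * y p.2 with hF
  have h1 : ∑' p : ℕ × ℕ, F ((Equiv.prodComm ℕ ℕ) p) = ∑' p, F p :=
    Equiv.tsum_eq _ F
  have h2 : ∀ p : ℕ × ℕ, F ((Equiv.prodComm ℕ ℕ) p) = -F p := by
    intro p
    simp only [hF, Equiv.prodComm_apply, Prod.fst_swap, Prod.snd_swap]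
    rw [hskew p.2 p.1]; ring
  rw [tsum_congr h2, tsum_neg] at h1
  linarith

lemma vaux_D_nonneg (a : ℕ → ℕ → ℝ) (hskew : ∀ k i, a k i = -a i k)
    (hbd : ∀ k i, |a k i| ≤ 1)
    (b : ℕ → ℝ) (hbn : ∀ k, 0 ≤ b k) (hbB : ∀ k, b k ≤ b 0) (hbanti : Antitone b)
    (hpos : ∀ k i, k < i → 0 ≤ a k i)
    (y : ℕ → ℝ) (hy0 : ∀ k, 0 ≤ y k) (hys : Summable y) :
    0 ≤ ∑' p : ℕ × ℕ, b p.1 * a p.1 p.2 * y p.1 * y p.2 := by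
  set F : ℕ × ℕ → ℝ := fun p => b p.1 * a p.1 p.2 * y p.1 * y p.2 with hFdef
  have hc : ∀ k, |b k| ≤ b 0 := fun k => by
    rw [abs_of_nonneg (hbn k)]; exact hbB k
  have hFs : Summable F := vaux_prod_summable a hbd b (b 0) hc y hy0 hys
  have hFs' : Summable (F ∘ (Equiv.prodComm ℕ ℕ)) :=
    (Equiv.prodComm ℕ ℕ).summable_iff.mpr hFs
  have h1 : ∑' p : ℕ × ℕ, F ((Equiv.prodComm ℕ ℕ) p) = ∑' p, F p :=
    Equiv.tsum_eq _ F
  have h2 : ∑' p : ℕ × ℕ, (F p + F ((Equiv.prodComm ℕ ℕ) p))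
      = ∑' p, F p + ∑' p, F ((Equiv.prodComm ℕ ℕ) p) := Summable.tsum_add hFs hFs'
  have h3 : 0 ≤ ∑' p : ℕ × ℕ, (F p + F ((Equiv.prodComm ℕ ℕ) p)) := by
    apply tsum_nonneg
    intro p
    have heq : F p + F ((Equiv.prodComm ℕ ℕ) p)
        = (b p.1 - b p.2) * a p.1 p.2 * (y p.1 * y p.2) := by
      simp only [hFdef, Equiv.prodComm_apply, Prod.fst_swap, Prod.snd_swap]
      rw [hskew p.2 p.1]; ring
    rw [heq]
    apply mul_nonneg _ (mul_nonneg (hy0 p.1) (hy0 p.2))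
    rcases lt_trichotomy p.1 p.2 with h | h | h
    · exact mul_nonneg (sub_nonneg.2 (hbanti h.le)) (hpos _ _ h)
    · have : a p.1 p.2 = 0 := by
        have := hskew p.1 p.2; rw [h] at this ⊢; linarith
      rw [this, mul_zero]
    · have h1' : b p.1 - b p.2 ≤ 0 := sub_nonpos.2 (hbanti h.le)
      have h2' : a p.1 p.2 ≤ 0 := by
        rw [hskew p.1 p.2]; simpa using hpos _ _ h
      exact mul_nonneg_of_nonpos_of_nonpos h1' h2'
  rw [h2, h1] at h3
  linarith

lemma vaux_cy_summable (c : ℕ → ℝ) (C : ℝ) (hc : ∀ k, |c k| ≤ C)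
    (y : ℕ → ℝ) (hy0 : ∀ k, 0 ≤ y k) (hys : Summable y) :
    Summable fun k => c k * y k := by
  apply Summable.of_abs
  apply (hys.mul_left C).of_nonneg_of_le (fun k => abs_nonneg _)
  intro k
  rw [abs_mul, abs_of_nonneg (hy0 k)]
  exact mul_le_mul_of_nonneg_right (hc k) (hy0 k)

lemma vaux_phi_decomp (a : ℕ → ℕ → ℝ) (hbd : ∀ k i, |a k i| ≤ 1)
    (c : ℕ → ℝ) (C : ℝ) (hc : ∀ k, |c k| ≤ C)
    (y : ℕ → ℝ) (hy0 : ∀ k, 0 ≤ y k) (hys : Summable y) (hy1 : ∑' k, y k = 1) :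
    ∑' k, c k * (y k * (1 + ∑' i, a k i * y i))
      = (∑' k, c k * y k) + ∑' p : ℕ × ℕ, c p.1 * a p.1 p.2 * y p.1 * y p.2 := by
  have hcy : Summable fun k => c k * y k := vaux_cy_summable c C hc y hy0 hys
  have hcyg : Summable fun k => c k * y k * (∑' i, a k i * y i) := by
    apply Summable.of_abs
    apply (hys.mul_left C).of_nonneg_of_le (fun k => abs_nonneg _)
    intro k
    rw [abs_mul, abs_mul, abs_of_nonneg (hy0 k)]
    calc |c k| * y k * |∑' i, a k i * y i|
        ≤ |c k| * y k * 1 :=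
          mul_le_mul_of_nonneg_left (vaux_g_bound a hbd y hy0 hys hy1 k)
            (mul_nonneg (abs_nonneg _) (hy0 k))
      _ ≤ C * y k := by
          rw [mul_one]; exact mul_le_mul_of_nonneg_right (hc k) (hy0 k)
  have heq : ∀ k, c k * (y k * (1 + ∑' i, a k i * y i))
      = c k * y k + c k * y k * (∑' i, a k i * y i) := by
    intro k; ring
  rw [tsum_congr heq, Summable.tsum_add hcy hcyg,
    vaux_double a hbd c C hc y hy0 hys]

lemma vaux_step (a : ℕ → ℕ → ℝ) (hskew : ∀ k i, a k i = -a i k)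
    (hbd : ∀ k i, |a k i| ≤ 1)
    (y : ℕ → ℝ) (hy0 : ∀ k, 0 ≤ y k) (hys : Summable y) (hy1 : ∑' k, y k = 1) :
    (∀ k, 0 ≤ y k * (1 + ∑' i, a k i * y i)) ∧
    Summable (fun k => y k * (1 + ∑' i, a k i * y i)) ∧
    ∑' k, y k * (1 + ∑' i, a k i * y i) = 1 := by
  have hg : ∀ k, |∑' i, a k i * y i| ≤ 1 := vaux_g_bound a hbd y hy0 hys hy1
  have hpos : ∀ k, 0 ≤ y k * (1 + ∑' i, a k i * y i) := by
    intro k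
    apply mul_nonneg (hy0 k)
    have := (abs_le.1 (hg k)).1; linarith
  refine ⟨hpos, ?_, ?_⟩
  · apply (hys.mul_left 2).of_nonneg_of_le hpos
    intro k
    have := (abs_le.1 (hg k)).2
    calc y k * (1 + ∑' i, a k i * y i) ≤ y k * 2 :=
          mul_le_mul_of_nonneg_left (by linarith) (hy0 k)
      _ = 2 * y k := by ring
  · have h1 : ∀ _ : ℕ, |(1 : ℝ)| ≤ 1 := fun _ => by simp
    have := vaux_phi_decomp a hbd (fun _ => 1) 1 h1 y hy0 hys hy1
    simp only [one_mul] at this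
    rw [this, hy1, vaux_sum_zero a hskew hbd y hy0 hys, add_zero]

theorem stmt_11 (a : ℕ → ℕ → ℝ)
    (hskew : ∀ k i, a k i = -a i k) (hbd : ∀ k i, |a k i| ≤ 1)
    (hclass : (∀ k i, k < i → 0 ≤ a k i) ∨ (∀ k i, k < i → a k i ≤ 0))
    (V : (ℕ → ℝ) → (ℕ → ℝ))
    (hV : ∀ x k, V x k = x k * (1 + ∑' i, a k i * x i))
    (b : ℕ → ℝ) (hb0 : Tendsto b atTop (𝓝 0))
    (hmono : ∀ k, b (k + 1) ≤ b k)
    (x : ℕ → ℝ) (hx : (∀ k, 0 ≤ x k) ∧ Summable x ∧ ∑' k, x k = 1) :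
    ((∀ k i, k < i → 0 ≤ a k i) → Monotone (fun n => ∑' k, b k * (V^[n] x) k)) ∧
    ((∀ k i, k < i → a k i ≤ 0) → Antitone (fun n => ∑' k, b k * (V^[n] x) k)) ∧
    (∀ n, 0 ≤ ∑' k, b k * (V^[n] x) k ∧ ∑' k, b k * (V^[n] x) k ≤ b 0) ∧
    (∃ L, Tendsto (fun n => ∑' k, b k * (V^[n] x) k) atTop (𝓝 L)) := by
  obtain ⟨hx0, hxs, hx1⟩ := hx
  have hbanti : Antitone b := antitone_nat_of_succ_le hmono
  have hbn : ∀ k, 0 ≤ b k := fun k =>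
    le_of_tendsto hb0 (Filter.eventually_atTop.2 ⟨k, fun n hn => hbanti hn⟩)
  have hbB : ∀ k, b k ≤ b 0 := fun k => hbanti (Nat.zero_le k)
  have hbabs : ∀ k, |b k| ≤ b 0 := fun k => by
    rw [abs_of_nonneg (hbn k)]; exact hbB k
  -- invariance of the simplex
  have hinv : ∀ n, (∀ k, 0 ≤ V^[n] x k) ∧ Summable (V^[n] x) ∧ ∑' k, V^[n] x k = 1 := by
    intro n
    induction n with
    | zero => exact ⟨hx0, hxs, hx1⟩
    | succ n ih =>
      obtain ⟨h0, hs, h1⟩ := ih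
      rw [Function.iterate_succ_apply']
      have hstep := vaux_step a hskew hbd _ h0 hs h1
      refine ⟨fun k => ?_, ?_, ?_⟩
      · rw [hV]; exact hstep.1 k
      · exact hstep.2.1.congr (fun k => (hV _ k).symm)
      · rw [tsum_congr (fun k => hV (V^[n] x) k)]
        exact hstep.2.2
  -- one-step decomposition of φ_b
  have hdecomp : ∀ n, ∑' k, b k * (V^[n + 1] x) k
      = (∑' k, b k * (V^[n] x) k)
        + ∑' p : ℕ × ℕ, b p.1 * a p.1 p.2 * (V^[n] x) p.1 * (V^[n] x) p.2 := by
    intro n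
    obtain ⟨h0, hs, h1⟩ := hinv n
    rw [Function.iterate_succ_apply']
    rw [tsum_congr (fun k => by rw [hV (V^[n] x) k])]
    exact vaux_phi_decomp a hbd b (b 0) hbabs _ h0 hs h1
  -- monotone part
  have hmonoV : (∀ k i, k < i → 0 ≤ a k i) →
      Monotone (fun n => ∑' k, b k * (V^[n] x) k) := by
    intro hpos
    apply monotone_nat_of_le_succ
    intro n
    obtain ⟨h0, hs, _⟩ := hinv n
    have hD := vaux_D_nonneg a hskew hbd b hbn hbB hbanti hpos _ h0 hs
    rw [hdecomp n]
    linarith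
  -- antitone part
  have hantiV : (∀ k i, k < i → a k i ≤ 0) →
      Antitone (fun n => ∑' k, b k * (V^[n] x) k) := by
    intro hneg
    apply antitone_nat_of_succ_le
    intro n
    obtain ⟨h0, hs, _⟩ := hinv n
    set a' : ℕ → ℕ → ℝ := fun k i => -a k i with ha'
    have hskew' : ∀ k i, a' k i = -a' i k := fun k i => by
      simp only [ha', neg_neg]; rw [hskew k i, neg_neg]
    have hbd' : ∀ k i, |a' k i| ≤ 1 := fun k i => by
      simp only [ha', abs_neg]; exact hbd k i
    have hpos' : ∀ k i, k < i → 0 ≤ a' k i := fun k i h => by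
      simp only [ha']; linarith [hneg k i h]
    have hD' := vaux_D_nonneg a' hskew' hbd' b hbn hbB hbanti hpos' _ h0 hs
    have heq : ∑' p : ℕ × ℕ, b p.1 * a' p.1 p.2 * (V^[n] x) p.1 * (V^[n] x) p.2
        = -∑' p : ℕ × ℕ, b p.1 * a p.1 p.2 * (V^[n] x) p.1 * (V^[n] x) p.2 := by
      rw [← tsum_neg]
      apply tsum_congr
      intro p
      simp only [ha']; ring
    rw [heq] at hD'
    rw [hdecomp n]
    linarith
  -- bounds
  have hbounds : ∀ n, 0 ≤ ∑' k, b k * (V^[n] x) k ∧ ∑' k, b k * (V^[n] x) k ≤ b 0 := by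
    intro n
    obtain ⟨h0, hs, h1⟩ := hinv n
    constructor
    · exact tsum_nonneg (fun k => mul_nonneg (hbn k) (h0 k))
    · have hle : ∑' k, b k * (V^[n] x) k ≤ ∑' k, b 0 * (V^[n] x) k := by
        apply Summable.tsum_le_tsum _ (vaux_cy_summable b (b 0) hbabs _ h0 hs) (hs.mul_left (b 0))
        intro k
        exact mul_le_mul_of_nonneg_right (hbB k) (h0 k)
      rw [tsum_mul_left, h1, mul_one] at hle
      exact hle
  refine ⟨hmonoV, hantiV, hbounds, ?_⟩
  rcases hclass with hpos | hneg
  · refine ⟨_, tendsto_atTop_ciSup (hmonoV hpos) ⟨b 0, ?_⟩⟩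
    rintro v ⟨n, rfl⟩
    exact (hbounds n).2
  · refine ⟨_, tendsto_atTop_ciInf (hantiV hneg) ⟨0, ?_⟩⟩
    rintro v ⟨n, rfl⟩
    exact (hbounds n).1
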